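/- With notation as in the previous lemma, for a partition η of a positive integer i: ∑_{η₁ ⊔ η₂ = η} (-1)^{ℓ(η₂)} (|η₁| + ℓ(η₁)) / (Aut(η₁) · Aut(η₂)) equals i+1 if η is the single-part partition (i), and equals 0 otherwise. Here |η₁| is the sum of the parts of η₁. -/

import Mathlib

lemma sumA (M : ℕ) : ∑ x ∈ Finset.range (M+1),
    (-1:ℚ)^(M-x) / (Nat.factorial x * Nat.factorial (M-x)) = if M = 0 then 1 else 0 := by
  have key : ∑ x ∈ Finset.range (M+1), ((-1:ℚ))^x * (M.choose x) = if M = 0 then 1 else 0 := by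
    have := Int.alternating_sum_range_choose (n := M)
    exact_mod_cast congrArg (fun z : ℤ => (z : ℚ)) this
  have h : ∀ x ∈ Finset.range (M+1), (-1:ℚ)^(M-x) / (Nat.factorial x * Nat.factorial (M-x))
      = ((-1:ℚ)^M / M.factorial) * ((-1)^x * (M.choose x)) := by
    intro x hx
    have hxM : x ≤ M := Nat.lt_succ_iff.mp (Finset.mem_range.mp hx)
    have hs : ((-1:ℚ))^M = (-1)^(M-x) * (-1)^x := by
      rw [← pow_add, Nat.sub_add_cancel hxM]
    rw [Nat.cast_choose ℚ hxM, hs]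
    have h1 : ((Nat.factorial x : ℚ)) ≠ 0 := Nat.cast_ne_zero.mpr (Nat.factorial_ne_zero x)
    have h2 : ((Nat.factorial (M-x) : ℚ)) ≠ 0 := Nat.cast_ne_zero.mpr (Nat.factorial_ne_zero _)
    have h3 : ((Nat.factorial M : ℚ)) ≠ 0 := Nat.cast_ne_zero.mpr (Nat.factorial_ne_zero M)
    field_simp
    ring_nf
    have hone : ((-1:ℚ))^(x*2) = 1 := by
      rw [pow_mul]
      rcases Nat.even_or_odd x with h | h
      · rw [h.neg_one_pow]; norm_num
      · rw [h.neg_one_pow]; norm_num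
    rw [hone]
  rw [Finset.sum_congr rfl h, ← Finset.mul_sum, key]
  split_ifs with h0
  · subst h0; simp
  · simp

lemma sumB (M : ℕ) (hM : 1 ≤ M) : ∑ x ∈ Finset.range (M+1),
    (-1:ℚ)^(M-x) * x / (Nat.factorial x * Nat.factorial (M-x)) = if M = 1 then 1 else 0 := by
  obtain ⟨N, rfl⟩ : ∃ N, M = N + 1 := ⟨M - 1, (Nat.succ_pred_eq_of_pos hM).symm⟩
  rw [Finset.sum_range_succ']
  have h0 : (-1:ℚ)^(N+1-0) * (0:ℕ) / (Nat.factorial 0 * Nat.factorial (N+1-0)) = 0 := by simp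
  rw [h0, add_zero]
  have h : ∀ y ∈ Finset.range (N+1),
      (-1:ℚ)^(N+1-(y+1)) * ((y+1 : ℕ)) / (Nat.factorial (y+1) * Nat.factorial (N+1-(y+1)))
      = (-1:ℚ)^(N-y) / (Nat.factorial y * Nat.factorial (N-y)) := by
    intro y hy
    have e1 : N + 1 - (y + 1) = N - y := by omega
    rw [e1, Nat.factorial_succ]
    have h1 : ((Nat.factorial y : ℚ)) ≠ 0 := Nat.cast_ne_zero.mpr (Nat.factorial_ne_zero y)
    have h2 : ((Nat.factorial (N-y) : ℚ)) ≠ 0 := Nat.cast_ne_zero.mpr (Nat.factorial_ne_zero _)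
    have h3 : ((y:ℚ) + 1) ≠ 0 := by positivity
    push_cast
    field_simp
  rw [Finset.sum_congr rfl h, sumA N]
  simp

lemma sumA' (M : ℕ) (hM : 1 ≤ M) : ∑ x : Fin (M+1),
    (-1:ℚ)^(M-(x:ℕ)) / (Nat.factorial (x:ℕ) * Nat.factorial (M-(x:ℕ))) = 0 := by
  rw [Fin.sum_univ_eq_sum_range (fun x => (-1:ℚ)^(M-x) / (Nat.factorial x * Nat.factorial (M-x))),
    sumA M, if_neg (by omega)]

lemma sumB' (M : ℕ) (hM : 1 ≤ M) : ∑ x : Fin (M+1),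
    ((x:ℕ):ℚ) * ((-1:ℚ)^(M-(x:ℕ)) / (Nat.factorial (x:ℕ) * Nat.factorial (M-(x:ℕ))))
    = if M = 1 then 1 else 0 := by
  rw [Fin.sum_univ_eq_sum_range (fun x => (x:ℚ) * ((-1:ℚ)^(M-x) / (Nat.factorial x * Nat.factorial (M-x))))]
  rw [← sumB M hM]
  exact Finset.sum_congr rfl (fun x _ => by ring)

/-- Lemma 2 of the paper: for a partition `η` of `i ≥ 1` with distinct positive
part-sizes `n j` of multiplicities `m j ≥ 1`, summing over all splittings
`η = η₁ ⊔ η₂` (`η₁` takes `k j` copies of the part `n j`),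
`∑ (-1)^(ℓ(η₂)) (|η₁| + ℓ(η₁)) / (Aut(η₁) ⬝ Aut(η₂))` equals `i + 1` if `η` is
the single-part partition `(i)` (i.e. `ℓ(η) = 1`), and `0` otherwise. -/
theorem partition_splitting_weighted_alternating_sum (i r : ℕ) (hi : 1 ≤ i) (hr : 1 ≤ r)
    (n : Fin r → ℕ) (hn : Function.Injective n) (hnpos : ∀ j, 0 < n j)
    (m : Fin r → ℕ) (hm : ∀ j, 1 ≤ m j) (hsum : ∑ j, n j * m j = i) :
    ∑ k : (j : Fin r) → Fin (m j + 1),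
      (-1 : ℚ) ^ (∑ j, (m j - (k j : ℕ))) *
        ((∑ j, n j * (k j : ℕ) : ℕ) + (∑ j, (k j : ℕ) : ℕ)) /
        ((∏ j, (Nat.factorial (k j : ℕ) : ℚ)) *
          (∏ j, (Nat.factorial (m j - (k j : ℕ)) : ℚ)))
      = if (∑ j, m j) = 1 then (i : ℚ) + 1 else 0 := by
  classical
  set F : (l : Fin r) → ℕ → ℚ := fun l x =>
    (-1:ℚ)^(m l - x) / (Nat.factorial x * Nat.factorial (m l - x)) with hF
  set g : Fin r → (l : Fin r) → ℕ → ℚ := fun j l x =>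
    (if l = j then ((n j : ℚ) + 1) * (x:ℚ) else 1) * F l x with hg
  have key : ∀ k : (j : Fin r) → Fin (m j + 1),
      (-1 : ℚ) ^ (∑ j, (m j - (k j : ℕ))) *
        ((∑ j, n j * (k j : ℕ) : ℕ) + (∑ j, (k j : ℕ) : ℕ)) /
        ((∏ j, (Nat.factorial (k j : ℕ) : ℚ)) *
          (∏ j, (Nat.factorial (m j - (k j : ℕ)) : ℚ)))
      = ∑ j, ∏ l, g j l (k l) := by
    intro k
    have hprod : ∀ j : Fin r, ∏ l, g j l (k l)
        = (((n j : ℚ) + 1) * ((k j : ℕ):ℚ)) * ∏ l, F l (k l) := by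
      intro j
      rw [hg]
      simp only [Finset.prod_mul_distrib]
      congr 1
      rw [Finset.prod_ite_eq' Finset.univ j (fun l => ((n j : ℚ) + 1) * ((k l : ℕ):ℚ))]
      simp
    rw [Finset.sum_congr rfl (fun j _ => hprod j), ← Finset.sum_mul]
    have hFprod : ∏ l, F l (k l)
        = (-1 : ℚ) ^ (∑ j, (m j - (k j : ℕ))) /
          ((∏ j, (Nat.factorial (k j : ℕ) : ℚ)) * (∏ j, (Nat.factorial (m j - (k j : ℕ)) : ℚ))) := by
      rw [hF]
      simp only [Finset.prod_div_distrib, Finset.prod_mul_distrib, Finset.prod_pow_eq_pow_sum]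
    rw [hFprod]
    have hnum : ((∑ j, n j * (k j : ℕ) : ℕ) : ℚ) + ((∑ j, (k j : ℕ) : ℕ) : ℚ)
        = ∑ j, (((n j : ℚ) + 1) * ((k j : ℕ):ℚ)) := by
      push_cast
      rw [← Finset.sum_add_distrib]
      exact Finset.sum_congr rfl (fun j _ => by ring)
    rw [mul_comm, mul_div_assoc, ← hnum]
  rw [Finset.sum_congr rfl (fun k _ => key k), Finset.sum_comm]
  have hswap : ∀ j : Fin r, (∑ k : (l : Fin r) → Fin (m l + 1), ∏ l, g j l (k l))
      = ∏ l, ∑ x : Fin (m l + 1), g j l (x : ℕ) := by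
    intro j
    rw [Finset.prod_univ_sum (fun l => (Finset.univ : Finset (Fin (m l + 1)))) (fun l x => g j l (x:ℕ))]
    rw [Fintype.piFinset_univ]
  have hinner : ∀ j l : Fin r, (∑ x : Fin (m l + 1), g j l (x : ℕ))
      = if l = j then ((n j : ℚ) + 1) * (if m j = 1 then 1 else 0) else 0 := by
    intro j l
    by_cases hlj : l = j
    · subst hlj
      simp only [hg, if_pos rfl, if_true]
      calc ∑ x : Fin (m l + 1), ((n l : ℚ) + 1) * ((x:ℕ):ℚ) * F l (x:ℕ)
          = ((n l : ℚ) + 1) * ∑ x : Fin (m l + 1), ((x:ℕ):ℚ) * F l (x:ℕ) := by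
            rw [Finset.mul_sum]; exact Finset.sum_congr rfl (fun x _ => by ring)
        _ = ((n l : ℚ) + 1) * (if m l = 1 then 1 else 0) := by rw [hF]; rw [sumB' (m l) (hm l)]
    · simp only [hg, if_neg hlj, one_mul]
      rw [hF]
      exact sumA' (m l) (hm l)
  rw [Finset.sum_congr rfl (fun j _ => hswap j)]
  rw [Finset.sum_congr rfl (fun j _ => Finset.prod_congr rfl (fun l _ => hinner j l))]
  rcases Nat.lt_or_ge r 2 with hr2 | hr2
  · -- r = 1
    have hr1 : r = 1 := by omega
    subst hr1
    rw [Fin.sum_univ_one, Fin.prod_univ_one, Fin.sum_univ_one, if_pos rfl]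
    rw [Fin.sum_univ_one] at hsum
    by_cases hm1 : m 0 = 1
    · rw [if_pos hm1, if_pos hm1, mul_one]
      have : n 0 = i := by rw [← hsum, hm1, mul_one]
      rw [this]
    · rw [if_neg hm1, if_neg hm1, mul_zero]
  · -- r ≥ 2 : both sides zero
    have hL : ∀ j : Fin r, (∏ l : Fin r,
        if l = j then ((n j : ℚ) + 1) * (if m j = 1 then 1 else 0) else 0) = 0 := by
      intro j
      obtain ⟨l, hl⟩ := Fintype.exists_ne_of_one_lt_card (by rw [Fintype.card_fin]; omega) j
      exact Finset.prod_eq_zero (Finset.mem_univ l) (if_neg hl)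
    rw [Finset.sum_congr rfl (fun j _ => hL j), Finset.sum_const, smul_zero]
    rw [if_neg]
    have : r ≤ ∑ j, m j := by
      calc r = ∑ _j : Fin r, 1 := by simp
        _ ≤ ∑ j, m j := Finset.sum_le_sum (fun j _ => hm j)
    omega
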